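/- Let $\eta:[0,T]\to[0,\infty]$ satisfy, for all $t\in[0,T]$, the renewal equation $\eta(t)=\eta(0)e^{-\beta t}+\int_0^t \beta e^{-\beta s}\sum_{k=0}^{n_0} c_k\,\eta(t-s)^k\,ds$ where $c_k\ge0$, $\beta>0$, $\eta(0)=\psi_0>0$. Then as long as $\eta$ is finite on $[0,t_0)$, it coincides there with $\psi_0\,\rho$, where $\rho$ is the unique solution of the ODE $\rho'(t)=\beta\big(\sum_{k=0}^{n_0} c_k\psi_0^{k-1}\rho(t)^k-\rho(t)\big)$, $\rho(0)=1$. -/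

import Mathlib

open Set MeasureTheory

lemma cov_aux (t : ℝ) (f : ℝ → ENNReal) :
    ∫⁻ s in Ioc (0 : ℝ) t, f (t - s) = ∫⁻ u in Ico (0 : ℝ) t, f u := by
  have hpre : (fun x => t - x) ⁻¹' Ico (0 : ℝ) t = Ioc (0 : ℝ) t := by
    ext x
    simp only [mem_preimage, mem_Ico, mem_Ioc]
    constructor <;> intro h <;> constructor <;> linarith [h.1, h.2]
  calc ∫⁻ s in Ioc (0 : ℝ) t, f (t - s)
      = ∫⁻ s, f ((MeasurableEquiv.subLeft t) s) ∂(volume.restrict (Ioc (0:ℝ) t)) := rfl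
    _ = ∫⁻ u, f u ∂(Measure.map (MeasurableEquiv.subLeft t) (volume.restrict (Ioc (0:ℝ) t))) :=
        (lintegral_map_equiv f (MeasurableEquiv.subLeft t)).symm
    _ = ∫⁻ u in Ico (0 : ℝ) t, f u := by
        congr 1
        rw [show ((MeasurableEquiv.subLeft t : ℝ → ℝ)) = (fun x : ℝ => t - x) from rfl]
        have hm : Measurable (fun x : ℝ => t - x) := measurable_id.const_sub t
        have h2 := Measure.restrict_map (μ := (volume : Measure ℝ)) hm
          (measurableSet_Ico (a := (0:ℝ)) (b := t))
        rw [Measure.map_sub_left_eq_self volume t, hpre] at h2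
        exact h2.symm

/-- If `η` satisfies the renewal equation
`η(t) = ψ₀ e^{-βt} + ∫_0^t β e^{-βs} ∑ₖ cₖ η(t-s)^k ds`,
then, as long as `η` is finite on `[0,t₀)`, it coincides there with `ψ₀ ρ`, where `ρ` is
the (unique) solution of `ρ' = β(∑ₖ cₖ ψ₀^{k-1} ρ^k - ρ)`, `ρ(0) = 1`. -/
theorem stmt_6 (β ψ₀ t₀ : ℝ) (hβ : 0 < β) (hψ₀ : 0 < ψ₀) (ht₀ : 0 < t₀)
    (n₀ : ℕ) (c : ℕ → ℝ) (hc : ∀ k, 0 ≤ c k)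
    (η : ℝ → ENNReal) (hη0 : η 0 = ENNReal.ofReal ψ₀)
    (hrenew : ∀ t : ℝ, 0 ≤ t →
      η t = ENNReal.ofReal (ψ₀ * Real.exp (-β * t)) +
        ∫⁻ s in Ioc (0 : ℝ) t,
          ENNReal.ofReal (β * Real.exp (-β * s)) *
            ∑ k ∈ Finset.range (n₀ + 1), ENNReal.ofReal (c k) * (η (t - s)) ^ k)
    (hfin : ∀ t ∈ Ico (0 : ℝ) t₀, η t < ⊤)
    (ρ : ℝ → ℝ) (hρ0 : ρ 0 = 1)
    (hsol : ∀ t ∈ Ico (0 : ℝ) t₀,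
      HasDerivAt ρ
        (β * (∑ k ∈ Finset.range (n₀ + 1), c k * ψ₀ ^ ((k : ℤ) - 1) * ρ t ^ k - ρ t)) t)
    (huniq : ∀ ρ' : ℝ → ℝ, ρ' 0 = 1 →
      (∀ t ∈ Ico (0 : ℝ) t₀,
        HasDerivAt ρ'
          (β * (∑ k ∈ Finset.range (n₀ + 1), c k * ψ₀ ^ ((k : ℤ) - 1) * ρ' t ^ k - ρ' t)) t) →
      EqOn ρ' ρ (Ico 0 t₀)) :
    ∀ t ∈ Ico (0 : ℝ) t₀, η t = ENNReal.ofReal (ψ₀ * ρ t) := by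
  classical
  -- the integrand and the cumulative integral
  set g : ℝ → ENNReal := fun u => ENNReal.ofReal (β * Real.exp (β * u)) *
      ∑ k ∈ Finset.range (n₀ + 1), ENNReal.ofReal (c k) * (η u) ^ k with hg
  set I : ℝ → ENNReal := fun t => ∫⁻ u in Ico (0:ℝ) t, g u with hIdef
  -- key renewal identity after change of variables
  have key : ∀ t : ℝ, 0 ≤ t →
      η t = ENNReal.ofReal (Real.exp (-β * t)) * (ENNReal.ofReal ψ₀ + I t) := by
    intro t ht
    rw [hrenew t ht]
    have hcong : (∫⁻ s in Ioc (0:ℝ) t,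
        ENNReal.ofReal (β * Real.exp (-β * s)) *
          ∑ k ∈ Finset.range (n₀ + 1), ENNReal.ofReal (c k) * (η (t - s)) ^ k)
        = ∫⁻ s in Ioc (0:ℝ) t,
            (fun u => ENNReal.ofReal (β * Real.exp (-β * (t - u))) *
              ∑ k ∈ Finset.range (n₀ + 1), ENNReal.ofReal (c k) * (η u) ^ k) (t - s) := by
      refine lintegral_congr fun s => ?_
      simp only [sub_sub_cancel]
    rw [hcong, cov_aux t (fun u => ENNReal.ofReal (β * Real.exp (-β * (t - u))) *
      ∑ k ∈ Finset.range (n₀ + 1), ENNReal.ofReal (c k) * (η u) ^ k)]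
    have hin : ∀ u : ℝ, ENNReal.ofReal (β * Real.exp (-β * (t - u)))
        = ENNReal.ofReal (Real.exp (-β * t)) * ENNReal.ofReal (β * Real.exp (β * u)) := by
      intro u
      rw [← ENNReal.ofReal_mul (Real.exp_nonneg _)]
      congr 1
      rw [show -β * (t - u) = -β * t + β * u by ring, Real.exp_add]
      ring
    have hcong2 : (∫⁻ u in Ico (0:ℝ) t,
        ENNReal.ofReal (β * Real.exp (-β * (t - u))) *
          ∑ k ∈ Finset.range (n₀ + 1), ENNReal.ofReal (c k) * (η u) ^ k)
        = ∫⁻ u in Ico (0:ℝ) t, ENNReal.ofReal (Real.exp (-β * t)) * g u := by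
      refine lintegral_congr fun u => ?_
      rw [hin u, hg, mul_assoc]
    rw [hcong2, lintegral_const_mul' _ _ ENNReal.ofReal_ne_top, mul_add,
      ← ENNReal.ofReal_mul (Real.exp_nonneg _)]
    rw [mul_comm (Real.exp (-β * t)) ψ₀, hIdef]
  have Imono : Monotone I := fun a b hab =>
    lintegral_mono' (Measure.restrict_mono (Ico_subset_Ico le_rfl hab) le_rfl) le_rfl
  have Imeas : Measurable I := Imono.measurable
  have Izero : ∀ t : ℝ, t ≤ 0 → I t = 0 := by
    intro t ht
    rw [hIdef]
    simp only []
    rw [Ico_eq_empty (not_lt.2 ht), Measure.restrict_empty, lintegral_zero_measure]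
  have Ifin : ∀ t ∈ Ico (0:ℝ) t₀, I t ≠ ⊤ := by
    intro t ht htop
    have h1 := key t ht.1
    have h2 := hfin t ht
    have hne : ENNReal.ofReal (Real.exp (-β * t)) ≠ 0 := by
      simp [ENNReal.ofReal_eq_zero, not_le, Real.exp_pos]
    have htt : ENNReal.ofReal ψ₀ + (⊤ : ENNReal) = ⊤ := by simp
    rw [h1, htop, htt, ENNReal.mul_top hne] at h2
    exact absurd h2 (lt_irrefl ⊤)
  set J : ℝ → ℝ := fun t => (I t).toReal with hJdef
  have Jnn : ∀ t, 0 ≤ J t := fun t => ENNReal.toReal_nonneg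
  have Jmono : ∀ a b : ℝ, a ≤ b → b < t₀ → J a ≤ J b := by
    intro a b hab hb
    rcases le_or_gt b 0 with h | h
    · rw [hJdef]; simp only []
      rw [Izero a (hab.trans h), Izero b h]
    · exact ENNReal.toReal_mono (Ifin b ⟨h.le, hb⟩) (Imono hab)
  have ηeq : ∀ u : ℝ, 0 ≤ u → u < t₀ →
      η u = ENNReal.ofReal (Real.exp (-β * u) * (ψ₀ + J u)) := by
    intro u hu hu'
    rw [key u hu, ← ENNReal.ofReal_toReal (Ifin u ⟨hu, hu'⟩),
      ← ENNReal.ofReal_add hψ₀.le (Jnn u), ← ENNReal.ofReal_mul (Real.exp_nonneg _)]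
  set H : ℝ → ℝ := fun u => β * Real.exp (β * u) *
      ∑ k ∈ Finset.range (n₀ + 1), c k * (Real.exp (-β * u) * (ψ₀ + J u)) ^ k with hHdef
  have basenn : ∀ u : ℝ, 0 ≤ Real.exp (-β * u) * (ψ₀ + J u) := fun u =>
    mul_nonneg (Real.exp_nonneg _) (add_nonneg hψ₀.le (Jnn u))
  have Hnn : ∀ u, 0 ≤ H u := fun u =>
    mul_nonneg (mul_nonneg hβ.le (Real.exp_nonneg _))
      (Finset.sum_nonneg fun k _ => mul_nonneg (hc k) (pow_nonneg (basenn u) k))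
  have Jmeas : Measurable J := Imeas.ennreal_toReal
  have Hmeas : Measurable H := by
    refine Measurable.mul ?_ (Finset.measurable_sum _ fun k _ => ?_)
    · exact measurable_const.mul (Real.measurable_exp.comp (measurable_id.const_mul β))
    · exact measurable_const.mul
        (((Real.measurable_exp.comp (measurable_id.const_mul (-β))).mul
          (measurable_const.add Jmeas)).pow_const k)
  have gH : ∀ u : ℝ, 0 ≤ u → u < t₀ → g u = ENNReal.ofReal (H u) := by
    intro u hu hu'
    rw [hg]
    simp only []
    rw [ηeq u hu hu']
    have hterm : ∀ k ∈ Finset.range (n₀ + 1),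
        ENNReal.ofReal (c k) * (ENNReal.ofReal (Real.exp (-β * u) * (ψ₀ + J u))) ^ k
          = ENNReal.ofReal (c k * (Real.exp (-β * u) * (ψ₀ + J u)) ^ k) := by
      intro k _
      rw [← ENNReal.ofReal_pow (basenn u), ← ENNReal.ofReal_mul (hc k)]
    rw [Finset.sum_congr rfl hterm,
      ← ENNReal.ofReal_sum_of_nonneg (fun k _ => mul_nonneg (hc k) (pow_nonneg (basenn u) k)),
      ← ENNReal.ofReal_mul (mul_nonneg hβ.le (Real.exp_nonneg _))]
  have IeqH : ∀ t : ℝ, t ≤ t₀ → I t = ∫⁻ u in Ico (0:ℝ) t, ENNReal.ofReal (H u) := by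
    intro t ht
    refine lintegral_congr_ae ((ae_restrict_iff' measurableSet_Ico).2
      (ae_of_all _ fun u hu => gH u hu.1 (lt_of_lt_of_le hu.2 ht)))
  have JeqInt : ∀ t : ℝ, 0 ≤ t → t < t₀ → J t = ∫ u in Ico (0:ℝ) t, H u := by
    intro t ht ht'
    have h1 := integral_toReal
      (f := fun u => ENNReal.ofReal (H u)) (μ := volume.restrict (Ico (0:ℝ) t))
      (Hmeas.ennreal_ofReal).aemeasurable (ae_of_all _ fun u => ENNReal.ofReal_lt_top)
    have h2 : ∫ u in Ico (0:ℝ) t, (ENNReal.ofReal (H u)).toReal = ∫ u in Ico (0:ℝ) t, H u :=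
      integral_congr_ae (ae_of_all _ fun u => ENNReal.toReal_ofReal (Hnn u))
    rw [hJdef]
    simp only []
    rw [IeqH t ht'.le, ← h1, h2]
  -- Lipschitz-type bound
  have lipb : ∀ b : ℝ, 0 ≤ b → b < t₀ → ∃ C : ℝ, 0 ≤ C ∧
      ∀ t₁ t₂ : ℝ, t₁ ≤ t₂ → t₂ ≤ b → J t₂ ≤ J t₁ + C * (t₂ - t₁) := by
    intro b hb hb'
    refine ⟨β * Real.exp (β * b) * ∑ k ∈ Finset.range (n₀ + 1), c k * (ψ₀ + J b) ^ k,
      mul_nonneg (mul_nonneg hβ.le (Real.exp_nonneg _))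
        (Finset.sum_nonneg fun k _ => mul_nonneg (hc k)
          (pow_nonneg (add_nonneg hψ₀.le (Jnn b)) k)), ?_⟩
    set C := β * Real.exp (β * b) * ∑ k ∈ Finset.range (n₀ + 1), c k * (ψ₀ + J b) ^ k with hC
    have hCnn : 0 ≤ C := mul_nonneg (mul_nonneg hβ.le (Real.exp_nonneg _))
      (Finset.sum_nonneg fun k _ => mul_nonneg (hc k)
        (pow_nonneg (add_nonneg hψ₀.le (Jnn b)) k))
    intro t₁ t₂ h12 h2b
    have hHb : ∀ u : ℝ, 0 ≤ u → u ≤ b → H u ≤ C := by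
      intro u hu hub
      have e1 : Real.exp (β * u) ≤ Real.exp (β * b) :=
        Real.exp_le_exp.2 (by nlinarith)
      have e2 : Real.exp (-β * u) ≤ 1 := Real.exp_le_one_iff.2 (by nlinarith)
      have e3 : J u ≤ J b := Jmono u b hub hb'
      have hbase : Real.exp (-β * u) * (ψ₀ + J u) ≤ ψ₀ + J b := by
        nlinarith [Jnn u, Jnn b, Real.exp_nonneg (-β * u), add_nonneg hψ₀.le (Jnn u)]
      have hsum : ∑ k ∈ Finset.range (n₀ + 1), c k * (Real.exp (-β * u) * (ψ₀ + J u)) ^ k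
          ≤ ∑ k ∈ Finset.range (n₀ + 1), c k * (ψ₀ + J b) ^ k :=
        Finset.sum_le_sum fun k _ => mul_le_mul_of_nonneg_left
          (pow_le_pow_left₀ (basenn u) hbase k) (hc k)
      rw [hHdef, hC]
      simp only []
      have hsum_nn : 0 ≤ ∑ k ∈ Finset.range (n₀ + 1),
          c k * (Real.exp (-β * u) * (ψ₀ + J u)) ^ k :=
        Finset.sum_nonneg fun k _ => mul_nonneg (hc k) (pow_nonneg (basenn u) k)
      have h1 : β * Real.exp (β * u) ≤ β * Real.exp (β * b) := by nlinarith
      exact mul_le_mul h1 hsum hsum_nn (mul_nonneg hβ.le (Real.exp_nonneg _))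
    set m := max t₁ 0 with hm
    have hsub : Ico (0:ℝ) t₂ ⊆ Ico (0:ℝ) t₁ ∪ Ico m t₂ := by
      intro u hu
      rcases lt_or_ge u t₁ with h | h
      · exact Or.inl ⟨hu.1, h⟩
      · exact Or.inr ⟨max_le h hu.1, hu.2⟩
    have step1 : I t₂ ≤ I t₁ + ∫⁻ u in Ico m t₂, g u :=
      le_trans (lintegral_mono' (Measure.restrict_mono hsub le_rfl) le_rfl)
        (lintegral_union_le _ _ _)
    have step2 : (∫⁻ u in Ico m t₂, g u) ≤ ENNReal.ofReal C * ENNReal.ofReal (t₂ - t₁) := by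
      have hpt : ∀ u ∈ Ico m t₂, g u ≤ ENNReal.ofReal C := by
        intro u hu
        have hu0 : 0 ≤ u := le_trans (le_max_right _ _) hu.1
        have hut : u < t₀ := lt_of_lt_of_le hu.2 (le_trans h2b hb'.le)
        rw [gH u hu0 hut]
        exact ENNReal.ofReal_le_ofReal (hHb u hu0 (le_trans hu.2.le h2b))
      calc (∫⁻ u in Ico m t₂, g u) ≤ ∫⁻ _ in Ico m t₂, ENNReal.ofReal C :=
            setLIntegral_mono measurable_const hpt
        _ = ENNReal.ofReal C * volume (Ico m t₂) := setLIntegral_const _ _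
        _ ≤ ENNReal.ofReal C * ENNReal.ofReal (t₂ - t₁) := by
            rw [Real.volume_Ico]
            exact mul_le_mul_right (ENNReal.ofReal_le_ofReal
              (by simp only [hm]; rcases le_total t₁ 0 with h | h <;>
                [skip; skip] <;> simp [max_eq_right, max_eq_left, h] <;> linarith)) _
    have hbfin : I b ≠ ⊤ := Ifin b ⟨hb, hb'⟩
    have hfin1 : I t₁ ≠ ⊤ := fun h =>
      hbfin (top_le_iff.1 (h ▸ Imono (le_trans h12 h2b)))
    have hfin2 : I t₂ ≠ ⊤ := fun h => hbfin (top_le_iff.1 (h ▸ Imono h2b))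
    have step3 : I t₂ ≤ I t₁ + ENNReal.ofReal (C * (t₂ - t₁)) := by
      refine le_trans step1 (add_le_add_right ?_ _)
      rw [ENNReal.ofReal_mul hCnn]
      exact step2
    have := ENNReal.toReal_mono (by
      refine ENNReal.add_ne_top.2 ⟨hfin1, ENNReal.ofReal_ne_top⟩) step3
    rw [ENNReal.toReal_add hfin1 ENNReal.ofReal_ne_top,
      ENNReal.toReal_ofReal (mul_nonneg hCnn (sub_nonneg.2 h12))] at this
    exact this
  -- continuity of J below t₀
  have Jcont : ∀ t : ℝ, t < t₀ → ContinuousAt J t := by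
    intro t ht
    set b := (max t 0 + t₀) / 2 with hb
    have hmax0 : 0 ≤ max t 0 := le_max_right _ _
    have hmaxt : max t 0 < t₀ := max_lt ht ht₀
    have hb0 : 0 ≤ b := by rw [hb]; linarith
    have hbt : t < b := by have := le_max_left t 0; rw [hb]; linarith
    have hbt₀ : b < t₀ := by rw [hb]; linarith
    obtain ⟨C, hC0, hlip⟩ := lipb b hb0 hbt₀
    have hL : LipschitzOnWith (Real.toNNReal C) J (Iic b) := by
      apply LipschitzOnWith.of_dist_le_mul
      have main : ∀ x ∈ Iic b, ∀ y ∈ Iic b, y ≤ x →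
          dist (J x) (J y) ≤ Real.toNNReal C * dist x y := by
        intro x hx y hy hyx
        rw [Real.dist_eq, Real.dist_eq,
          abs_of_nonneg (sub_nonneg.2 (Jmono y x hyx (lt_of_le_of_lt hx hbt₀))),
          abs_of_nonneg (sub_nonneg.2 hyx)]
        have := hlip y x hyx hx
        have hcoe : (Real.toNNReal C : ℝ) = C := Real.coe_toNNReal C hC0
        rw [hcoe]
        linarith
      intro x hx y hy
      rcases le_total y x with h | h
      · exact main x hx y hy h
      · rw [dist_comm x y, dist_comm (J x) (J y)]
        exact main y hy x hx h
    exact hL.continuousOn.continuousAt (Iic_mem_nhds hbt)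
  have Hcont : ∀ t : ℝ, t < t₀ → ContinuousAt H t := by
    intro t ht
    have h1 : ContinuousAt (fun u => ψ₀ + J u) t := continuousAt_const.add (Jcont t ht)
    have h2 : ContinuousAt (fun u : ℝ => Real.exp (-β * u)) t :=
      (Real.continuous_exp.comp (continuous_const.mul continuous_id)).continuousAt
    have h3 : ContinuousAt (fun u : ℝ => Real.exp (β * u)) t :=
      (Real.continuous_exp.comp (continuous_const.mul continuous_id)).continuousAt
    have hbase : ContinuousAt (fun u => Real.exp (-β * u) * (ψ₀ + J u)) t := h2.mul h1
    have hsum : ContinuousAt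
        (fun u => ∑ k ∈ Finset.range (n₀ + 1),
          c k * (Real.exp (-β * u) * (ψ₀ + J u)) ^ k) t := by
      apply tendsto_finset_sum
      intro k _
      exact continuousAt_const.mul (hbase.pow k)
    exact (continuousAt_const.mul h3).mul hsum
  set Jh : ℝ → ℝ := fun t => ∫ u in (0:ℝ)..t, H u with hJh
  have Jhderiv : ∀ t : ℝ, t < t₀ → HasDerivAt Jh (H t) t := by
    intro t ht
    apply intervalIntegral.integral_hasDerivAt_right
    · apply ContinuousOn.intervalIntegrable
      intro u hu
      have hu' : u < t₀ := by
        rcases le_total 0 t with h | h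
        · rw [uIcc_of_le h] at hu; exact lt_of_le_of_lt hu.2 ht
        · rw [uIcc_of_ge h] at hu; exact lt_of_le_of_lt hu.2 ht₀
      exact (Hcont u hu').continuousWithinAt
    · exact ⟨univ, Filter.univ_mem, by simpa using Hmeas.aestronglyMeasurable⟩
    · exact Hcont t ht
  have JheqJ : ∀ t : ℝ, 0 ≤ t → t < t₀ → Jh t = J t := by
    intro t ht ht'
    rw [hJh]
    simp only []
    rw [intervalIntegral.integral_of_le ht,
      ← Measure.restrict_congr_set Ico_ae_eq_Ioc]
    exact (JeqInt t ht ht').symm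
  set σ : ℝ → ℝ := fun t => Real.exp (-β * t) * (ψ₀ + Jh t) / ψ₀ with hσ
  have σ0 : σ 0 = 1 := by
    rw [hσ]
    simp only [hJh, intervalIntegral.integral_same, mul_zero, neg_zero, add_zero]
    rw [Real.exp_zero, one_mul, div_self hψ₀.ne']
  have σderiv : ∀ t ∈ Ico (0:ℝ) t₀, HasDerivAt σ
      (β * (∑ k ∈ Finset.range (n₀ + 1), c k * ψ₀ ^ ((k : ℤ) - 1) * σ t ^ k - σ t)) t := by
    intro t ht
    have hd1 : HasDerivAt (fun x : ℝ => Real.exp (-β * x)) (Real.exp (-β * t) * -β) t := by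
      have h0 : HasDerivAt (fun x : ℝ => -β * x) (-β) t := by
        simpa using (hasDerivAt_id t).const_mul (-β)
      simpa using h0.exp
    have hd2 : HasDerivAt (fun x => ψ₀ + Jh x) (H t) t := (Jhderiv t ht.2).const_add ψ₀
    have hd3 := (hd1.mul hd2).div_const ψ₀
    have hσfun : σ = fun x => Real.exp (-β * x) * (ψ₀ + Jh x) / ψ₀ := hσ
    rw [hσfun]
    refine hd3.congr_deriv ?_
    -- algebra
    have hJt : J t = Jh t := (JheqJ t ht.1 ht.2).symm
    have hHt : H t = β * Real.exp (β * t) *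
        ∑ k ∈ Finset.range (n₀ + 1), c k * (Real.exp (-β * t) * (ψ₀ + Jh t)) ^ k := by
      rw [hHdef]; simp only []; rw [hJt]
    set A := Real.exp (-β * t) with hA
    set P := ψ₀ + Jh t with hP
    set S := ∑ k ∈ Finset.range (n₀ + 1), c k * (A * P) ^ k with hS
    have hAe : A * Real.exp (β * t) = 1 := by
      rw [hA, ← Real.exp_add]
      rw [show -β * t + β * t = 0 by ring, Real.exp_zero]
    have hz : ∀ k : ℕ, ψ₀ ^ ((k : ℤ) - 1) = ψ₀ ^ k / ψ₀ := by
      intro k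
      rw [zpow_sub₀ hψ₀.ne', zpow_natCast, zpow_one]
    have hσt : σ t = A * P / ψ₀ := by rw [hσ]
    have hsum : ∑ k ∈ Finset.range (n₀ + 1), c k * ψ₀ ^ ((k : ℤ) - 1) * (A * P / ψ₀) ^ k
        = S / ψ₀ := by
      rw [hS, Finset.sum_div]
      refine Finset.sum_congr rfl fun k _ => ?_
      rw [hz k, div_pow]
      have hψk : (ψ₀ : ℝ) ^ k ≠ 0 := pow_ne_zero k hψ₀.ne'
      field_simp
    have hred : (fun x => Real.exp (-β * x) * (ψ₀ + Jh x) / ψ₀) t = A * P / ψ₀ := rfl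
    rw [hred, hsum, hHt]
    have key2 : A * -β * P + A * (β * Real.exp (β * t) * S) = β * S - β * (A * P) := by
      linear_combination β * S * hAe
    rw [key2]
    ring
  have hEq : EqOn σ ρ (Ico (0:ℝ) t₀) := huniq σ σ0 σderiv
  intro t ht
  rw [← hEq ht, ηeq t ht.1 ht.2]
  congr 1
  rw [hσ]
  simp only []
  rw [JheqJ t ht.1 ht.2]
  field_simp
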